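/- Let S(z), |z| = 1, be an r×r matrix-function on 𝕋, positive definite a.e. with entries in L¹(𝕋) and with log det S ∈ L¹(𝕋), and let A(z) = (f_{jk}(z)) be a measurable lower triangular matrix-function with f_{jj}(z) ≥ 0 a.e. such that S(z) = A(z)(A(z))* a.e. Then Σ_{j=1}^{r} log f_{jj}(z) = (1/2) log det S(z) for a.e. z ∈ 𝕋, and log f_{jj} ∈ L¹(𝕋) for every j = 1, 2, …, r. -/

import Mathlib

open MeasureTheory Complex Filter Set Metric Matrix
open scoped ComplexOrder

noncomputable section

/-- The point `e^{it}` on the unit circle. -/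
def circlePt (t : ℝ) : ℂ := Complex.exp (t * Complex.I)

/-- Normalized parametrization of the unit circle by `t ∈ (0, 2π]`. -/
def circleMeasure : Measure ℝ := volume.restrict (Set.Ioc 0 (2 * Real.pi))

/-- `w` is the radial (nontangential) boundary value of `F` at the boundary point `e^{it}`. -/
def HasBoundaryValueAt (F : ℂ → ℂ) (t : ℝ) (w : ℂ) : Prop :=
  Tendsto (fun r : ℝ => F ((r : ℂ) * circlePt t)) (nhdsWithin 1 (Set.Iio 1)) (nhds w)

/-- Membership in the Hardy space `H_p` of the unit disk. -/
def MemHardy (p : ℝ) (F : ℂ → ℂ) : Prop :=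
  DifferentiableOn ℂ F (Metric.ball (0 : ℂ) 1) ∧
  ∃ C : ℝ, ∀ r ∈ Set.Ico (0 : ℝ) 1,
    (∫ t in (0 : ℝ)..(2 * Real.pi), ‖F ((r : ℂ) * circlePt t)‖ ^ p) ≤ C

/-- `H_∞`: bounded analytic functions on the unit disk. -/
def MemHinfty (F : ℂ → ℂ) : Prop :=
  DifferentiableOn ℂ F (Metric.ball (0 : ℂ) 1) ∧
  ∃ C : ℝ, ∀ z ∈ Metric.ball (0 : ℂ) 1, ‖F z‖ ≤ C

/-- `F` is an outer function: `F(z) = c · exp((1/2π) ∫ (e^{it}+z)/(e^{it}-z) log|F(e^{it})| dt)`,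
where `|F(e^{it})| = m t` is the boundary modulus of `F` and `|c| = 1`. -/
def IsOuter (F : ℂ → ℂ) : Prop :=
  ∃ (c : ℂ) (m : ℝ → ℝ), ‖c‖ = 1 ∧
    (∀ᵐ t ∂circleMeasure,
      Tendsto (fun r : ℝ => ‖F ((r : ℂ) * circlePt t)‖) (nhdsWithin 1 (Set.Iio 1)) (nhds (m t))) ∧
    (∀ z ∈ Metric.ball (0 : ℂ) 1,
      F z = c * Complex.exp ((2 * Real.pi : ℂ)⁻¹ *
        ∫ t in (0 : ℝ)..(2 * Real.pi), ((circlePt t + z) / (circlePt t - z)) * (Real.log (m t) : ℂ)))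

/-- The `n`-th Fourier coefficient of a function on the circle. -/
def fourierCoef (f : ℝ → ℂ) (n : ℤ) : ℂ :=
  (2 * Real.pi)⁻¹ * ∫ t in (0 : ℝ)..(2 * Real.pi), f t * Complex.exp (-(n : ℂ) * t * Complex.I)

/-- `χ` is a spectral factor of the matrix function `S` on the circle: its entries are in `H₂`,
its determinant is outer, and the boundary values `B` of `χ` satisfy `S = B Bᴴ` a.e. -/
def IsSpectralFactor {r : ℕ} (S : ℝ → Matrix (Fin r) (Fin r) ℂ)
    (χ : ℂ → Matrix (Fin r) (Fin r) ℂ) : Prop :=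
  (∀ j k, MemHardy 2 (fun z => χ z j k)) ∧
  IsOuter (fun z => (χ z).det) ∧
  ∃ B : ℝ → Matrix (Fin r) (Fin r) ℂ,
    (∀ j k, ∀ᵐ t ∂circleMeasure, HasBoundaryValueAt (fun z => χ z j k) t (B t j k)) ∧
    (∀ᵐ t ∂circleMeasure, S t = B t * (B t)ᴴ)


/-- If `S` is a.e. positive definite with integrable entries and `log det S ∈ L¹(𝕋)`, and
`S = A Aᴴ` a.e. with `A` lower triangular with nonnegative diagonal, then
`∑_j log f_{jj} = (1/2) log det S` a.e. and each `log f_{jj}` is integrable. -/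
theorem log_diagonal_integrable (r : ℕ)
    (S : ℝ → Matrix (Fin r) (Fin r) ℂ)
    (hpos : ∀ᵐ t ∂circleMeasure, (S t).PosDef)
    (hint : ∀ j k, Integrable (fun t => S t j k) circleMeasure)
    (hlog : Integrable (fun t => Real.log (‖(S t).det‖)) circleMeasure)
    (A : ℝ → Matrix (Fin r) (Fin r) ℂ)
    (hAmeas : ∀ j k, Measurable (fun t => A t j k))
    (hAlow : ∀ t, ∀ j k : Fin r, j < k → A t j k = 0)
    (hAdiag : ∀ᵐ t ∂circleMeasure, ∀ j : Fin r, (A t j j).im = 0 ∧ 0 ≤ (A t j j).re)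
    (hAfact : ∀ᵐ t ∂circleMeasure, S t = A t * (A t)ᴴ) :
    (∀ᵐ t ∂circleMeasure,
      ∑ j : Fin r, Real.log ((A t j j).re) = (1 / 2) * Real.log (‖(S t).det‖)) ∧
    (∀ j : Fin r, Integrable (fun t => Real.log ((A t j j).re)) circleMeasure) := by
  have key : ∀ᵐ t ∂circleMeasure,
      (∑ j : Fin r, Real.log ((A t j j).re) = (1/2) * Real.log (‖(S t).det‖)) ∧
      (∀ j : Fin r, Real.log ((A t j j).re) ≤ (1/2) * (S t j j).re) := by
    filter_upwards [hpos, hAdiag, hAfact] with t hp hd hfac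
    -- diagonal entries are real
    have hdiagC : ∀ j : Fin r, A t j j = ((A t j j).re : ℂ) := by
      intro j
      exact Complex.ext (by simp) (by simp [(hd j).1])
    have hdetA : (A t).det = ((∏ j, (A t j j).re : ℝ) : ℂ) := by
      rw [Matrix.det_of_lowerTriangular (A t) (fun i j h => hAlow t i j h)]
      push_cast
      exact Finset.prod_congr rfl fun j _ => hdiagC j
    have hdetS : (S t).det = (((∏ j, (A t j j).re)^2 : ℝ) : ℂ) := by
      rw [hfac, Matrix.det_mul, Matrix.det_conjTranspose, hdetA]
      push_cast
      ring_nf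
      simp [← Complex.ofReal_prod, sq, mul_comm]
    have hprodpos : 0 < ∏ j, (A t j j).re := by
      have hne : (S t).det ≠ 0 := hp.det_pos.ne'
      rw [hdetS] at hne
      have : ∏ j, (A t j j).re ≠ 0 := by
        intro h; apply hne; rw [h]; simp
      rcases this.lt_or_gt with h | h
      · exact absurd (Finset.prod_nonneg fun j _ => (hd j).2) (not_le.2 h)
      · exact h
    have hfpos : ∀ j : Fin r, 0 < (A t j j).re := by
      intro j
      rcases (hd j).2.lt_or_eq with h | h
      · exact h
      · exfalso
        exact hprodpos.ne' (Finset.prod_eq_zero (Finset.mem_univ j) h.symm)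
    have habs : ‖(S t).det‖ = (∏ j, (A t j j).re)^2 := by
      rw [hdetS, Complex.norm_real, Real.norm_eq_abs]
      exact abs_of_nonneg (sq_nonneg _)
    constructor
    · rw [habs, Real.log_pow, Real.log_prod fun j _ => (hfpos j).ne']
      push_cast
      try ring
    · intro j
      -- S t j j .re = ∑ k, normSq (A t j k) ≥ (A t j j).re ^ 2
      have hS : (S t j j).re = ∑ k, Complex.normSq (A t j k) := by
        rw [hfac]
        simp [Matrix.mul_apply, Matrix.conjTranspose_apply, Complex.mul_conj]
        try simp [← Complex.ofReal_sum]
      have hge : ((A t j j).re)^2 ≤ (S t j j).re := by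
        rw [hS]
        calc ((A t j j).re)^2 ≤ Complex.normSq (A t j j) := by
              rw [Complex.normSq_apply]; nlinarith [sq_nonneg (A t j j).im, sq (A t j j).re]
          _ ≤ ∑ k, Complex.normSq (A t j k) :=
              Finset.single_le_sum (fun k _ => Complex.normSq_nonneg _) (Finset.mem_univ j)
      have : Real.log ((A t j j).re) = (1/2) * Real.log (((A t j j).re)^2) := by
        rw [Real.log_pow]; push_cast; ring
      rw [this]
      have h1 : Real.log (((A t j j).re)^2) ≤ ((A t j j).re)^2 :=
        (Real.log_le_sub_one_of_pos (pow_pos (hfpos j) 2)).trans (by linarith)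
      nlinarith
  constructor
  · filter_upwards [key] with t ht using ht.1
  · intro j
    -- bound: |log f_j| ≤ |(1/2) log |det S|| + ∑ k, (1/2) |(S t k k).re|
    have hmeas : ∀ k : Fin r, AEStronglyMeasurable (fun t => Real.log ((A t k k).re)) circleMeasure :=
      fun k => (Real.measurable_log.comp (Complex.measurable_re.comp (hAmeas k k))).aestronglyMeasurable
    have hBint : Integrable (fun t => |(1/2) * Real.log (‖(S t).det‖)| +
        ∑ k : Fin r, (1/2) * |(S t k k).re|) circleMeasure := by
      apply Integrable.add
      · exact (hlog.const_mul (1/2)).abs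
      · exact integrable_finset_sum _ fun k _ => ((hint k k).re.abs.const_mul (1/2))
    refine Integrable.mono' hBint (hmeas j) ?_
    filter_upwards [key] with t ht
    obtain ⟨hsum, hle⟩ := ht
    have hub : ∀ k : Fin r, Real.log ((A t k k).re) ≤ (1/2) * |(S t k k).re| :=
      fun k => (hle k).trans (by
        have := le_abs_self ((S t k k).re); linarith)
    rw [Real.norm_eq_abs, abs_le]
    constructor
    · -- lower bound
      have heq : Real.log ((A t j j).re) + ∑ k ∈ Finset.univ.erase j, Real.log ((A t k k).re)
          = (1/2) * Real.log (‖(S t).det‖) := by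
        rw [Finset.add_sum_erase _ (fun k => Real.log ((A t k k).re)) (Finset.mem_univ j)]; exact hsum
      have h2 : ∑ k ∈ Finset.univ.erase j, Real.log ((A t k k).re)
          ≤ ∑ k : Fin r, (1/2) * |(S t k k).re| := by
        calc ∑ k ∈ Finset.univ.erase j, Real.log ((A t k k).re)
            ≤ ∑ k ∈ Finset.univ.erase j, (1/2) * |(S t k k).re| :=
              Finset.sum_le_sum fun k _ => hub k
          _ ≤ ∑ k : Fin r, (1/2) * |(S t k k).re| :=
              Finset.sum_le_sum_of_subset_of_nonneg (Finset.subset_univ _)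
                (fun k _ _ => by positivity)
      have h3 : -((1/2) * Real.log (‖(S t).det‖)) ≤ |(1/2) * Real.log (‖(S t).det‖)| :=
        neg_le_abs _
      linarith
    · exact (hub j).trans (by
        have h1 : (1/2) * |(S t j j).re| ≤ ∑ k : Fin r, (1/2) * |(S t k k).re| :=
          Finset.single_le_sum (f := fun k => (1/2) * |(S t k k).re|) (fun k _ => by positivity) (Finset.mem_univ j)
        have h2 : 0 ≤ |(1/2) * Real.log (‖(S t).det‖)| := abs_nonneg _
        linarith)
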